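/- Let k ≥ 2. If d⁻(k−1) = d⁻(k) = d⁻(k+1), then v_k is the unique Jaconian vertex of J_l(1), where l = 2k − d⁻(k); that is, 𝕁(J_l(1)) = {k}. -/
import Mathlib


/-- The Jaco out-degree function `f`: `f 0 = 0` and, for `n ≥ 1`,
`f n = n - #{k : 1 ≤ k < n ∧ k + f k ≥ n}` (the out-degree of `v_n` in `J_∞(1)`). -/
def jacoF : ℕ → ℕ
  | 0 => 0
  | n + 1 =>
    (n + 1) - ((Finset.range (n + 1)).attach.filter
      (fun a => 1 ≤ a.1 ∧ n + 1 ≤ a.1 + jacoF a.1)).card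
  decreasing_by all_goals exact Finset.mem_range.mp a.2

/-- The in-degree `d⁻(j) = #{i : 1 ≤ i < j ∧ j ≤ i + f i}` of `v_j` in `J_∞(1)`. -/
def jacoDin (j : ℕ) : ℕ := ((Finset.Ico 1 j).filter (fun i => j ≤ i + jacoF i)).card

/-- The degree `d_n(j) = d⁻(j) + #{k : j < k ≤ n ∧ k ≤ j + f j}` of `v_j` in the
underlying undirected graph of the finite Jaco graph `J_n(1)`. -/
def jacoDeg (n j : ℕ) : ℕ :=
  jacoDin j + ((Finset.Ioc j n).filter (fun k => k ≤ j + jacoF j)).card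

/-- The maximum degree `Δ(J_n(1)) = max_{1 ≤ j ≤ n} d_n(j)`. -/
def jacoDelta (n : ℕ) : ℕ := (Finset.Icc 1 n).sup (jacoDeg n)

/-- The Jaconian set `𝕁(J_n(1)) = {j : 1 ≤ j ≤ n ∧ d_n(j) = Δ(J_n(1))}`. -/
def jacoJ (n : ℕ) : Finset ℕ := (Finset.Icc 1 n).filter (fun j => jacoDeg n j = jacoDelta n)

lemma jacoF_eq (n : ℕ) : jacoF n = n - jacoDin n := by
  cases n with
  | zero => simp [jacoF, jacoDin]
  | succ m =>
    rw [jacoF]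
    congr 1
    rw [jacoDin, Finset.filter_attach (fun a => 1 ≤ a ∧ m + 1 ≤ a + jacoF a), Finset.card_map, Finset.card_attach]
    congr 1
    ext x
    simp only [Finset.mem_filter, Finset.mem_range, Finset.mem_Ico]
    tauto

lemma jacoDin_lt (n : ℕ) (hn : 1 ≤ n) : jacoDin n < n := by
  have h := Finset.card_filter_le (Finset.Ico 1 n) (fun i => n ≤ i + jacoF i)
  rw [Nat.card_Ico] at h
  unfold jacoDin
  omega

lemma jacoDin_succ_le (n : ℕ) : jacoDin (n + 1) ≤ jacoDin n + 1 := by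
  unfold jacoDin
  have hsub : (Finset.Ico 1 (n+1)).filter (fun i => n+1 ≤ i + jacoF i) ⊆
      insert n ((Finset.Ico 1 n).filter (fun i => n ≤ i + jacoF i)) := by
    intro x hx
    simp only [Finset.mem_filter, Finset.mem_Ico] at hx
    simp only [Finset.mem_insert, Finset.mem_filter, Finset.mem_Ico]
    omega
  calc _ ≤ (insert n ((Finset.Ico 1 n).filter (fun i => n ≤ i + jacoF i))).card :=
        Finset.card_le_card hsub
    _ ≤ _ := Finset.card_insert_le _ _

lemma jacoF_mono : Monotone jacoF := by
  apply monotone_nat_of_le_succ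
  intro n
  have h1 := jacoDin_succ_le n
  have h2 := jacoDin_lt (n+1) (by omega)
  rw [jacoF_eq, jacoF_eq]
  omega

lemma jacoDeg_eq (n j : ℕ) : jacoDeg n j = jacoDin j + (min (j + jacoF j) n - j) := by
  unfold jacoDeg
  congr 1
  have : (Finset.Ioc j n).filter (fun k => k ≤ j + jacoF j) =
      Finset.Ioc j (min (j + jacoF j) n) := by
    ext x
    simp only [Finset.mem_filter, Finset.mem_Ioc, le_min_iff]
    omega
  rw [this, Nat.card_Ioc]

/-- If `d⁻(k-1) = d⁻(k) = d⁻(k+1)`, then `v_k` is the unique Jaconian vertex of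
`J_l(1)` where `l = 2k - d⁻(k)`. -/
theorem stmt_9 (k : ℕ) (hk : 2 ≤ k)
    (h1 : jacoDin (k - 1) = jacoDin k) (h2 : jacoDin k = jacoDin (k + 1)) :
    jacoJ (2 * k - jacoDin k) = {k} := by
  set d := jacoDin k with hd
  have hdk : d < k := jacoDin_lt k (by omega)
  set l := 2 * k - d with hl
  have hkl : k ≤ l := by omega
  have hfk : jacoF k = k - d := by rw [jacoF_eq]
  -- degree at k equals k
  have hdegk : jacoDeg l k = k := by
    rw [jacoDeg_eq, hfk, ← hd]
    omega
  -- degrees elsewhere are < k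
  have hlt : ∀ j, 1 ≤ j → j ≤ l → j ≠ k → jacoDeg l j < k := by
    intro j hj1 hjl hjk
    have hfj : jacoF j = j - jacoDin j := jacoF_eq j
    have hdj : jacoDin j < j := jacoDin_lt j hj1
    rw [jacoDeg_eq]
    rcases lt_or_gt_of_ne hjk with hlt | hgt
    · omega
    · -- j > k : jacoF j ≥ jacoF (k+1) = k+1-d
      have hf1 : jacoF (k+1) = k + 1 - d := by rw [jacoF_eq, ← h2]
      have hmono : jacoF (k+1) ≤ jacoF j := jacoF_mono (by omega)
      omega
  have hle : ∀ j ∈ Finset.Icc 1 l, jacoDeg l j ≤ k := by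
    intro j hj
    simp only [Finset.mem_Icc] at hj
    by_cases hjk : j = k
    · subst hjk; omega
    · exact le_of_lt (hlt j hj.1 hj.2 hjk)
  have hdelta : jacoDelta l = k := by
    apply le_antisymm
    · exact Finset.sup_le hle
    · calc k = jacoDeg l k := hdegk.symm
        _ ≤ _ := Finset.le_sup (Finset.mem_Icc.mpr ⟨by omega, hkl⟩)
  ext j
  simp only [jacoJ, Finset.mem_filter, Finset.mem_Icc, Finset.mem_singleton, hdelta]
  constructor
  · rintro ⟨⟨hj1, hjl⟩, hdeg⟩
    by_contra hjk
    exact absurd hdeg (Nat.ne_of_lt (hlt j hj1 hjl hjk))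
  · rintro rfl
    exact ⟨⟨by omega, hkl⟩, hdegk⟩
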